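/- The function u*(y,z) = H(y)H(z), with H(x) = tanh(x/√2), satisfies the supersolution inequality -∂²_y u* - ∂²_z u* - (6/(y²-z²))(y ∂_y u* - z ∂_z u*) - u* + (u*)³ ≥ 0 in the region {(y,z) : y > z > 0}. -/

import Mathlib

noncomputable def H : ℝ → ℝ := fun x => Real.tanh (x / Real.sqrt 2)

open Real

lemma hasDerivAt_tanh' (x : ℝ) : HasDerivAt Real.tanh (1 - Real.tanh x ^ 2) x := by
  have hc : Real.cosh x ≠ 0 := (Real.cosh_pos x).ne'
  have h := (Real.hasDerivAt_sinh x).div (Real.hasDerivAt_cosh x) hc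
  have hfun : (Real.sinh / Real.cosh) = Real.tanh := by
    funext y; rw [Pi.div_apply, Real.tanh_eq_sinh_div_cosh]
  rw [hfun] at h
  refine h.congr_deriv ?_
  rw [Real.tanh_eq_sinh_div_cosh]
  field_simp

lemma H_hasDerivAt (x : ℝ) : HasDerivAt H ((1 - H x ^ 2) / Real.sqrt 2) x := by
  have hs : (Real.sqrt 2) ≠ 0 := by positivity
  have h1 : HasDerivAt (fun y : ℝ => y / Real.sqrt 2) (1 / Real.sqrt 2) x :=
    (hasDerivAt_id x).div_const _
  have h2 := (hasDerivAt_tanh' (x / Real.sqrt 2)).comp x h1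
  refine h2.congr_deriv ?_
  simp [H]
  ring

lemma deriv_H : deriv H = fun x => (1 - H x ^ 2) / Real.sqrt 2 := by
  funext x; exact (H_hasDerivAt x).deriv

lemma deriv_deriv_H (x : ℝ) : deriv (deriv H) x = H x ^ 3 - H x := by
  rw [deriv_H]
  have hs : (0:ℝ) < Real.sqrt 2 := by positivity
  have h : HasDerivAt (fun y => (1 - H y ^ 2) / Real.sqrt 2)
      ((-(2 * H x * ((1 - H x ^ 2) / Real.sqrt 2))) / Real.sqrt 2) x := by
    have h1 : HasDerivAt (fun y => 1 - H y ^ 2) (-(2 * H x * ((1 - H x ^ 2) / Real.sqrt 2))) x := by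
      have := ((H_hasDerivAt x).pow 2).const_sub 1
      refine this.congr_deriv ?_
      ring
    exact h1.div_const _
  rw [h.deriv]
  have h2 : Real.sqrt 2 * Real.sqrt 2 = 2 := Real.mul_self_sqrt (by norm_num)
  field_simp
  rw [Real.sq_sqrt (by norm_num : (0:ℝ) ≤ 2)]; ring

lemma H_pos {x : ℝ} (hx : 0 < x) : 0 < H x := by
  have : 0 < x / Real.sqrt 2 := by positivity
  exact div_pos (Real.sinh_pos_iff.mpr this) (Real.cosh_pos _) |>.trans_eq
    (Real.tanh_eq_sinh_div_cosh _).symm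

lemma H_lt_one (x : ℝ) : H x < 1 := by
  have := Real.sinh_lt_cosh (x / Real.sqrt 2)
  rw [show H x = Real.sinh (x / Real.sqrt 2) / Real.cosh (x / Real.sqrt 2) from
    Real.tanh_eq_sinh_div_cosh _]
  exact (div_lt_one (Real.cosh_pos _)).mpr this

lemma sinh_lt_mul_cosh {x : ℝ} (hx : 0 < x) : Real.sinh x < x * Real.cosh x := by
  have hmono : StrictMonoOn (fun t => t * Real.cosh t - Real.sinh t) (Set.Ici 0) := by
    apply strictMonoOn_of_deriv_pos (convex_Ici 0)
    · exact (continuous_id.mul Real.continuous_cosh |>.sub Real.continuous_sinh).continuousOn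
    · intro t ht
      rw [interior_Ici, Set.mem_Ioi] at ht
      have hd : HasDerivAt (fun t => t * Real.cosh t - Real.sinh t) (t * Real.sinh t) t := by
        have := ((hasDerivAt_id t).mul (Real.hasDerivAt_cosh t)).sub (Real.hasDerivAt_sinh t)
        refine this.congr_deriv ?_
        simp [id_eq]
      rw [hd.deriv]
      exact mul_pos ht (Real.sinh_pos_iff.mpr ht)
  have := hmono (Set.self_mem_Ici) (Set.mem_Ici.mpr hx.le) hx
  simp at this
  linarith

lemma sinh_ratio {y z : ℝ} (hz : 0 < z) (hzy : z < y) :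
    y * Real.sinh z < z * Real.sinh y := by
  have hmono : StrictMonoOn (fun t => z * Real.sinh t - t * Real.sinh z) (Set.Ici z) := by
    apply strictMonoOn_of_deriv_pos (convex_Ici z)
    · exact ((continuous_const.mul Real.continuous_sinh).sub
        (continuous_id.mul continuous_const)).continuousOn
    · intro t ht
      rw [interior_Ici, Set.mem_Ioi] at ht
      have hd : HasDerivAt (fun t => z * Real.sinh t - t * Real.sinh z)
          (z * Real.cosh t - Real.sinh z) t := by
        have := ((Real.hasDerivAt_sinh t).const_mul z).sub ((hasDerivAt_id t).mul_const (Real.sinh z))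
        refine this.congr_deriv ?_
        simp
      rw [hd.deriv]
      have h1 : Real.sinh z < z * Real.cosh z := sinh_lt_mul_cosh hz
      have h2 : Real.cosh z < Real.cosh t := by
        have habs : |z| < |t| := by
          rw [abs_of_pos hz, abs_of_pos (hz.trans ht)]; exact ht
        exact Real.cosh_lt_cosh.mpr habs
      nlinarith
  have := hmono (Set.self_mem_Ici) (Set.mem_Ici.mpr hzy.le) hzy
  simp at this
  linarith

lemma key_ineq {y z : ℝ} (hz : 0 < z) (hzy : z < y) :
    y * (1 - H y ^ 2) * H z ≤ z * (H y * (1 - H z ^ 2)) := by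
  have hs : (0:ℝ) < Real.sqrt 2 := by positivity
  have h2 : Real.sqrt 2 * Real.sqrt 2 = 2 := Real.mul_self_sqrt (by norm_num)
  set Y := y / Real.sqrt 2 with hY
  set Z := z / Real.sqrt 2 with hZ
  set sy := Real.sinh Y
  set cy := Real.cosh Y
  set sz := Real.sinh Z
  set cz := Real.cosh Z
  have hcy : 0 < cy := Real.cosh_pos Y
  have hcz : 0 < cz := Real.cosh_pos Z
  have hy : 0 < y := hz.trans hzy
  have hsz : 0 < sz := Real.sinh_pos_iff.mpr (by positivity)
  have hsy : 0 < sy := Real.sinh_pos_iff.mpr (by positivity)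
  have e1 : Real.sqrt 2 * y = 2 * Y := by rw [hY]; field_simp; nlinarith
  have e2 : Real.sqrt 2 * z = 2 * Z := by rw [hZ]; field_simp; nlinarith
  have h7 := sinh_ratio (y := Real.sqrt 2 * y) (z := Real.sqrt 2 * z)
    (by positivity) (by nlinarith)
  rw [e1, e2, Real.sinh_two_mul, Real.sinh_two_mul, ← e1, ← e2] at h7
  have h8' : 2 * (Real.sqrt 2 * (y * sz * cz)) < 2 * (Real.sqrt 2 * (z * sy * cy)) := by
    rw [show 2 * (Real.sqrt 2 * (y * sz * cz)) = Real.sqrt 2 * y * (2 * sz * cz) by ring,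
      show 2 * (Real.sqrt 2 * (z * sy * cy)) = Real.sqrt 2 * z * (2 * sy * cy) by ring]
    exact h7
  have h8 : y * sz * cz < z * sy * cy :=
    (mul_lt_mul_iff_right₀ hs).mp ((mul_lt_mul_iff_right₀ two_pos).mp h8')
  have hcysq : cy ^ 2 - sy ^ 2 = 1 := Real.cosh_sq_sub_sinh_sq Y
  have hczsq : cz ^ 2 - sz ^ 2 = 1 := Real.cosh_sq_sub_sinh_sq Z
  have hHy : H y = sy / cy := Real.tanh_eq_sinh_div_cosh Y
  have hHz : H z = sz / cz := Real.tanh_eq_sinh_div_cosh Z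
  have hL : y * (1 - H y ^ 2) * H z = (y * sz) / (cy ^ 2 * cz) := by
    rw [hHy, hHz]
    field_simp
    exact hcysq
  have hR : z * (H y * (1 - H z ^ 2)) = (z * sy) / (cy * cz ^ 2) := by
    rw [hHy, hHz]
    field_simp
    exact hczsq
  rw [hL, hR, div_le_div_iff₀ (by positivity) (by positivity)]
  nlinarith [mul_pos hcy hcz, h8]

/-- `u*(y,z) = H(y)H(z)` satisfies the supersolution inequality
`-∂²_y u* - ∂²_z u* - (6/(y²-z²))(y ∂_y u* - z ∂_z u*) - u* + (u*)³ ≥ 0`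
in the region `{y > z > 0}`. -/
theorem stmt_5 : ∀ y z : ℝ, z < y → 0 < z →
    -(deriv (deriv H) y * H z) - (H y * deriv (deriv H) z)
      - (6 / (y ^ 2 - z ^ 2)) * (y * (deriv H y * H z) - z * (H y * deriv H z))
      - H y * H z + (H y * H z) ^ 3 ≥ 0 := by
  intro y z hzy hz
  have hy : 0 < y := hz.trans hzy
  have hs : (0:ℝ) < Real.sqrt 2 := by positivity
  rw [deriv_deriv_H, deriv_deriv_H, deriv_H]
  simp only
  set a := H y with ha
  set b := H z with hb
  have hb0 : 0 < b := H_pos hz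
  have ha0 : 0 < a := H_pos hy
  have ha1 : a < 1 := H_lt_one y
  have hb1 : b < 1 := H_lt_one z
  have hkey : y * (1 - a ^ 2) * b ≤ z * (a * (1 - b ^ 2)) := key_ineq hz hzy
  have hD : 0 < y ^ 2 - z ^ 2 := by nlinarith
  have ha2 : 0 < 1 - a ^ 2 := by nlinarith
  have hb2 : 0 < 1 - b ^ 2 := by nlinarith
  have h1 : 0 ≤ a * b * (1 - a ^ 2) * (1 - b ^ 2) := by positivity
  have h2 : (6 / (y ^ 2 - z ^ 2)) *
      (y * ((1 - a ^ 2) / Real.sqrt 2 * b) - z * (a * ((1 - b ^ 2) / Real.sqrt 2))) ≤ 0 := by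
    apply mul_nonpos_of_nonneg_of_nonpos (by positivity)
    have : y * ((1 - a ^ 2) / Real.sqrt 2 * b) - z * (a * ((1 - b ^ 2) / Real.sqrt 2))
        = (y * (1 - a ^ 2) * b - z * (a * (1 - b ^ 2))) / Real.sqrt 2 := by ring
    rw [this]
    exact div_nonpos_of_nonpos_of_nonneg (by linarith) hs.le
  have hE : -((a ^ 3 - a) * b) - a * (b ^ 3 - b)
      - (6 / (y ^ 2 - z ^ 2)) *
        (y * ((1 - a ^ 2) / Real.sqrt 2 * b) - z * (a * ((1 - b ^ 2) / Real.sqrt 2)))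
      - a * b + (a * b) ^ 3
      = a * b * (1 - a ^ 2) * (1 - b ^ 2)
        - (6 / (y ^ 2 - z ^ 2)) *
          (y * ((1 - a ^ 2) / Real.sqrt 2 * b) - z * (a * ((1 - b ^ 2) / Real.sqrt 2))) := by
    ring
  linarith [hE.ge, h1, h2]
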